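/- Let g ≥ 1 and N ≥ 1 be integers. The entrywise reduction map modulo N from Sp_{2g}(ℤ) to Sp_{2g}(ℤ/Nℤ) is surjective: for every δ ∈ M_{2g}(ℤ/Nℤ) with δᵀ J δ = J, there exists γ ∈ M_{2g}(ℤ) with γᵀ J γ = J whose entrywise reduction modulo N equals δ. -/

import Mathlib

open Matrix

/-- The standard symplectic form matrix `J = [[0, -I_g],[I_g, 0]]` over a commutative ring. -/
def symplJ (R : Type*) [CommRing R] (g : ℕ) :
    Matrix (Fin g ⊕ Fin g) (Fin g ⊕ Fin g) R :=
  Matrix.fromBlocks 0 (-1) 1 0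

namespace SpSurj

variable {R : Type*} [CommRing R] {g : ℕ}

abbrev Idx (g : ℕ) := Fin g ⊕ Fin g

/-- symplectic pairing xᵀ J y -/
def pair (x y : Idx g → R) : R := x ⬝ᵥ (symplJ R g *ᵥ y)

lemma symplJ_mulVec_inl (y : Idx g → R) (i : Fin g) :
    (symplJ R g *ᵥ y) (Sum.inl i) = -y (Sum.inr i) := by
  simp [symplJ, fromBlocks_mulVec, zero_mulVec, neg_mulVec, one_mulVec]

lemma symplJ_mulVec_inr (y : Idx g → R) (i : Fin g) :
    (symplJ R g *ᵥ y) (Sum.inr i) = y (Sum.inl i) := by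
  simp [symplJ, fromBlocks_mulVec, zero_mulVec, neg_mulVec, one_mulVec]

lemma pair_self (x : Idx g → R) : pair x x = 0 := by
  simp only [pair, dotProduct, Fintype.sum_sum_type, symplJ_mulVec_inl, symplJ_mulVec_inr]
  rw [← Finset.sum_add_distrib]
  apply Finset.sum_eq_zero
  intro i _
  ring

lemma pair_antisymm (x y : Idx g → R) : pair x y = - pair y x := by
  simp only [pair, dotProduct, Fintype.sum_sum_type, symplJ_mulVec_inl, symplJ_mulVec_inr]
  rw [eq_neg_iff_add_eq_zero]
  simp only [← Finset.sum_add_distrib]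
  apply Finset.sum_eq_zero
  intro i _
  ring

lemma pair_add_left (x y z : Idx g → R) : pair (x + y) z = pair x z + pair y z := by
  simp [pair, add_dotProduct]

lemma pair_sub_left (x y z : Idx g → R) : pair (x - y) z = pair x z - pair y z := by
  simp [pair, sub_dotProduct]

lemma pair_add_right (x y z : Idx g → R) : pair x (y + z) = pair x y + pair x z := by
  simp [pair, mulVec_add, dotProduct_add]

lemma pair_smul_left (c : R) (x y : Idx g → R) : pair (c • x) y = c * pair x y := by
  simp [pair, smul_dotProduct, smul_eq_mul]

lemma pair_smul_right (c : R) (x y : Idx g → R) : pair x (c • y) = c * pair x y := by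
  simp [pair, mulVec_smul, dotProduct_smul, smul_eq_mul]

/-- basis vectors -/
def eb (j : Fin g) : Idx g → R := Pi.single (Sum.inl j) 1
def fb (j : Fin g) : Idx g → R := Pi.single (Sum.inr j) 1

lemma pair_eb_left (j : Fin g) (y : Idx g → R) : pair (eb j) y = -y (Sum.inr j) := by
  simp [pair, eb, Pi.single_apply, dotProduct, Fintype.sum_sum_type, symplJ_mulVec_inl,
    symplJ_mulVec_inr, Finset.sum_ite_eq']

lemma pair_fb_left (j : Fin g) (y : Idx g → R) : pair (fb j) y = y (Sum.inl j) := by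
  simp [pair, fb, Pi.single_apply, dotProduct, Fintype.sum_sum_type, symplJ_mulVec_inl,
    symplJ_mulVec_inr, Finset.sum_ite_eq']

lemma pair_eb_right (x : Idx g → R) (j : Fin g) : pair x (eb j) = x (Sum.inr j) := by
  rw [pair_antisymm, pair_eb_left]; ring

lemma pair_fb_right (x : Idx g → R) (j : Fin g) : pair x (fb j) = -x (Sum.inl j) := by
  rw [pair_antisymm, pair_fb_left]


/-- symplectic transvection matrix: x ↦ x + c ⟨u,x⟩ u -/
def Tv (u : Idx g → R) (c : R) : Matrix (Idx g) (Idx g) R :=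
  1 + c • vecMulVec u (vecMul u (symplJ R g))

lemma vecMulVec_mul (a : Idx g → R) (b : Idx g → R) (A : Matrix (Idx g) (Idx g) R) :
    vecMulVec a b * A = vecMulVec a (vecMul b A) := by
  ext i j
  simp [vecMulVec_apply, mul_apply, vecMul, dotProduct, Finset.mul_sum, mul_assoc,
    Fintype.sum_sum_type, mul_add]

lemma mul_vecMulVec (a : Idx g → R) (b : Idx g → R) (A : Matrix (Idx g) (Idx g) R) :
    A * vecMulVec a b = vecMulVec (A *ᵥ a) b := by
  ext i j
  simp [vecMulVec_apply, mul_apply, mulVec, dotProduct, Finset.sum_mul, Finset.mul_sum,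
    mul_assoc, mul_comm, mul_left_comm, Fintype.sum_sum_type, mul_add, add_mul]

lemma transpose_symplJ : (symplJ R g)ᵀ = -symplJ R g := by
  simp [symplJ, fromBlocks_transpose]
  ext i j
  cases i <;> cases j <;> simp [fromBlocks]

lemma vecMul_symplJ_dot_self (u : Idx g → R) : vecMul u (symplJ R g) ⬝ᵥ u = 0 := by
  rw [← dotProduct_mulVec]
  exact pair_self u

lemma vecMul_symplJ_eq (u : Idx g → R) : vecMul u (symplJ R g) = -(symplJ R g *ᵥ u) := by
  have h : symplJ R g = -(symplJ R g)ᵀ := by rw [transpose_symplJ, neg_neg]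
  conv_lhs => rw [h]
  rw [Matrix.vecMul_neg, vecMul_transpose]

lemma Tv_symplectic (u : Idx g → R) (c : R) :
    (Tv u c)ᵀ * symplJ R g * Tv u c = symplJ R g := by
  set J := symplJ R g with hJ
  set w := vecMul u J with hw
  have hwu : w ⬝ᵥ u = 0 := vecMul_symplJ_dot_self u
  have hJu : J *ᵥ u = -w := by
    rw [hw, vecMul_symplJ_eq, neg_neg]
  have hTt : (Tv u c)ᵀ = 1 + c • vecMulVec w u := by
    have : (vecMulVec u w)ᵀ = vecMulVec w u := by
      ext i j; simp [vecMulVec_apply, transpose_apply, mul_comm]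
    simp [Tv, transpose_add, transpose_smul, this]
    rfl
  rw [hTt]
  show (1 + c • vecMulVec w u) * J * (1 + c • vecMulVec u w) = J
  have h1 : vecMulVec w u * J = vecMulVec w w := by rw [vecMulVec_mul, hw]
  have h2 : J * vecMulVec u w = vecMulVec (J *ᵥ u) w := mul_vecMulVec _ _ _
  have h3 : vecMulVec (J *ᵥ u) w = -vecMulVec w w := by
    rw [hJu]; ext i j; simp [vecMulVec_apply]
  have h4 : vecMulVec w w * vecMulVec u w = 0 := by
    rw [vecMulVec_mul]
    have : vecMul w (vecMulVec u w) = (w ⬝ᵥ u) • w := by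
      ext j
      simp [vecMul, vecMulVec_apply, dotProduct, Finset.sum_mul, Finset.mul_sum, mul_assoc,
        Fintype.sum_sum_type, add_mul, smul_eq_mul]
    rw [this, hwu, zero_smul]
    ext i j; simp [vecMulVec_apply]
  rw [add_mul, add_mul, mul_add, mul_add]
  simp only [one_mul, mul_one, Matrix.smul_mul, Matrix.mul_smul, h1, h2, h3, h4, smul_neg,
    smul_zero]
  abel

lemma vecMulVec_mulVec' (a b x : Idx g → R) : vecMulVec a b *ᵥ x = (b ⬝ᵥ x) • a := by
  ext i
  simp [vecMulVec_apply, mulVec, dotProduct, Finset.mul_sum, Finset.sum_mul, mul_assoc,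
    smul_eq_mul, mul_comm, mul_left_comm, Fintype.sum_sum_type, mul_add, add_mul]

lemma Tv_mulVec (u : Idx g → R) (c : R) (x : Idx g → R) :
    Tv u c *ᵥ x = x + (c * pair u x) • u := by
  rw [Tv, add_mulVec, one_mulVec, smul_mulVec, vecMulVec_mulVec', ← dotProduct_mulVec]
  show x + c • (pair u x • u) = _
  rw [smul_smul]

lemma Tv_mulVec_fix {u x : Idx g → R} (c : R) (h : pair u x = 0) : Tv u c *ᵥ x = x := by
  rw [Tv_mulVec, h, mul_zero, zero_smul, add_zero]

lemma Tv_mul_Tv_neg (u : Idx g → R) (c : R) : Tv u c * Tv u (-c) = 1 := by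
  set J := symplJ R g
  set w := vecMul u J with hw
  have hwu : w ⬝ᵥ u = 0 := vecMul_symplJ_dot_self u
  have h4 : vecMulVec u w * vecMulVec u w = 0 := by
    rw [vecMulVec_mul]
    have : vecMul w (vecMulVec u w) = (w ⬝ᵥ u) • w := by
      ext j
      simp [vecMul, vecMulVec_apply, dotProduct, Finset.sum_mul, Finset.mul_sum, mul_assoc,
        Fintype.sum_sum_type, add_mul, smul_eq_mul]
    rw [this, hwu, zero_smul]
    ext i j; simp [vecMulVec_apply]
  show (1 + c • vecMulVec u w) * (1 + (-c) • vecMulVec u w) = 1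
  have expand : (1 + c • vecMulVec u w) * (1 + (-c) • vecMulVec u w)
      = 1 + ((-c) • vecMulVec u w + c • vecMulVec u w)
        + (c * (-c)) • (vecMulVec u w * vecMulVec u w) := by
    rw [mul_add, add_mul, add_mul, one_mul, mul_one, one_mul, Matrix.smul_mul,
      Matrix.mul_smul, smul_smul]
    abel
  rw [expand, h4]
  simp

variable {S : Type*} [CommRing S]

lemma symplJ_map (φ : R →+* S) : (symplJ R g).map φ = symplJ S g := by
  ext i j
  cases i <;> cases j <;> simp [symplJ, fromBlocks, Matrix.one_apply, apply_ite φ]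

lemma Tv_map (φ : R →+* S) (u : Idx g → R) (c : R) :
    (Tv u c).map φ = Tv (fun i => φ (u i)) (φ c) := by
  have hJ : ∀ a b : Idx g, φ (symplJ R g a b) = symplJ S g a b := fun a b => by
    simpa using congrFun (congrFun (symplJ_map (g := g) φ) a) b
  ext i j
  simp only [Tv, Matrix.map_apply, Matrix.add_apply, Matrix.smul_apply, vecMulVec_apply,
    vecMul, dotProduct, Fintype.sum_sum_type, smul_eq_mul, map_add, _root_.map_mul, map_sum,
    hJ, Matrix.one_apply]
  congr 1
  split <;> simp

section UnitLemma

variable {ι : Type*} [Fintype ι]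

lemma dot_sum {N : ℕ} {σ : Type*} (s : Finset σ) (α : ι → ZMod N) (f : σ → ι → ZMod N) :
    α ⬝ᵥ (∑ t ∈ s, f t) = ∑ t ∈ s, α ⬝ᵥ f t := by
  simp [dotProduct, Finset.mul_sum]
  rw [Finset.sum_comm]

lemma isUnit_of_forall_prime {N : ℕ} [NeZero N] (u : ZMod N)
    (h : ∀ p : ℕ, p.Prime → ∀ hd : p ∣ N, ZMod.castHom hd (ZMod p) u ≠ 0) :
    IsUnit u := by
  rw [← ZMod.natCast_zmod_val u, ZMod.isUnit_iff_coprime]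
  by_contra hc
  obtain ⟨p, hp, hpu, hpN⟩ := Nat.Prime.not_coprime_iff_dvd.mp hc
  refine h p hp hpN ?_
  rw [← ZMod.natCast_zmod_val u, map_natCast]
  rw [ZMod.natCast_eq_zero_iff]
  exact hpu

lemma exists_unit_unit {N : ℕ} (hN : 1 ≤ N) (α β : ι → ZMod N) (P : ι → Prop)
    (x y : ι → ZMod N) (hxP : ∀ i, ¬ P i → x i = 0) (hyP : ∀ i, ¬ P i → y i = 0)
    (hx : IsUnit (α ⬝ᵥ x)) (hy : IsUnit (β ⬝ᵥ y)) :
    ∃ z : ι → ZMod N, (∀ i, ¬ P i → z i = 0) ∧ IsUnit (α ⬝ᵥ z) ∧ IsUnit (β ⬝ᵥ z) := by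
  haveI : NeZero N := ⟨by omega⟩
  classical
  have key : ∀ (p : ℕ) (hp : p ∈ N.primeFactors), ∃ z : ι → ZMod N,
      (∀ i, ¬ P i → z i = 0) ∧
      (ZMod.castHom (Nat.dvd_of_mem_primeFactors hp) (ZMod p) (α ⬝ᵥ z) ≠ 0 ∧
       ZMod.castHom (Nat.dvd_of_mem_primeFactors hp) (ZMod p) (β ⬝ᵥ z) ≠ 0) := by
    intro p hp
    haveI : Fact p.Prime := ⟨Nat.prime_of_mem_primeFactors hp⟩
    set φ := ZMod.castHom (Nat.dvd_of_mem_primeFactors hp) (ZMod p) with hφ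
    have ha : φ (α ⬝ᵥ x) ≠ 0 := (hx.map φ).ne_zero
    have hb : φ (β ⬝ᵥ y) ≠ 0 := (hy.map φ).ne_zero
    by_cases hbx : φ (β ⬝ᵥ x) ≠ 0
    · exact ⟨x, hxP, ha, hbx⟩
    by_cases hay : φ (α ⬝ᵥ y) ≠ 0
    · exact ⟨y, hyP, hay, hb⟩
    push_neg at hbx hay
    refine ⟨x + y, fun i hi => by simp [hxP i hi, hyP i hi], ?_, ?_⟩
    · rw [dotProduct_add, map_add, hay, add_zero]; exact ha
    · rw [dotProduct_add, map_add, hbx, zero_add]; exact hb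
  choose Z hZP hZα hZβ using key
  set m : ℕ → ℕ := fun p => ∏ q ∈ N.primeFactors.erase p, q with hm
  set z : ι → ZMod N :=
    ∑ p ∈ N.primeFactors.attach, ((m p.1 : ZMod N) • Z p.1 p.2) with hz
  have hsupp : ∀ i, ¬ P i → z i = 0 := by
    intro i hi
    rw [hz]
    simp only [Finset.sum_apply, Pi.smul_apply]
    apply Finset.sum_eq_zero
    intro q _
    rw [hZP q.1 q.2 i hi, smul_zero]
  have main : ∀ (γ : ι → ZMod N),
      (∀ p (hp : p ∈ N.primeFactors),
        ZMod.castHom (Nat.dvd_of_mem_primeFactors hp) (ZMod p) (γ ⬝ᵥ Z p hp) ≠ 0) →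
      IsUnit (γ ⬝ᵥ z) := by
    intro γ hγ
    apply isUnit_of_forall_prime
    intro p hp hd
    have hpmem : p ∈ N.primeFactors := Nat.mem_primeFactors.mpr ⟨hp, hd, by omega⟩
    haveI : Fact p.Prime := ⟨hp⟩
    set φ := ZMod.castHom hd (ZMod p) with hφ
    rw [hz, dot_sum, map_sum]
    rw [Finset.sum_eq_single_of_mem ⟨p, hpmem⟩ (Finset.mem_attach _ _)]
    · rw [dotProduct_smul, smul_eq_mul, _root_.map_mul, map_natCast]
      apply mul_ne_zero
      · rw [Ne, ZMod.natCast_eq_zero_iff]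
        intro hdvd
        obtain ⟨q, hq, hpq⟩ := (hp.prime.dvd_finset_prod_iff _).mp hdvd
        have hqprime : q.Prime := Nat.prime_of_mem_primeFactors (Finset.mem_of_mem_erase hq)
        have : p = q := (Nat.prime_dvd_prime_iff_eq hp hqprime).mp hpq
        exact (Finset.ne_of_mem_erase hq) this.symm
      · exact hγ p hpmem
    · intro q _ hq
      rw [dotProduct_smul, smul_eq_mul, _root_.map_mul, map_natCast]
      have hpq : p ≠ q.1 := by
        intro h
        apply hq
        apply Subtype.ext
        exact h.symm
      have : (↑(m q.1) : ZMod p) = 0 := by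
        rw [ZMod.natCast_eq_zero_iff]
        exact Finset.dvd_prod_of_mem _ (Finset.mem_erase.mpr ⟨hpq, hpmem⟩)
      rw [this, zero_mul]
  exact ⟨z, hsupp, main α (fun p hp => hZα p hp), main β (fun p hp => hZβ p hp)⟩

end UnitLemma

section Infra

variable {g : ℕ}

/-- level of an index -/
def levl : Idx g → ℕ := Sum.elim (fun j => (j : ℕ)) (fun j => (j : ℕ))

/-- supported on indices of level ≥ k -/
def Supp (k : ℕ) (x : Idx g → R) : Prop := ∀ i : Idx g, levl i < k → x i = 0

lemma Supp.sub {k : ℕ} {x y : Idx g → R} (hx : Supp k x) (hy : Supp k y) : Supp k (x - y) :=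
  fun i hi => by simp [hx i hi, hy i hi]

lemma Supp.add {k : ℕ} {x y : Idx g → R} (hx : Supp k x) (hy : Supp k y) : Supp k (x + y) :=
  fun i hi => by simp [hx i hi, hy i hi]

lemma Supp.smul {k : ℕ} (c : R) {x : Idx g → R} (hx : Supp k x) : Supp k (c • x) :=
  fun i hi => by simp [hx i hi]

lemma supp_eb {k : ℕ} {j : Fin g} (h : k ≤ (j : ℕ)) : Supp k (eb (R := R) j) := by
  intro i hi
  have hne : i ≠ Sum.inl j := by
    rintro rfl
    simp [levl] at hi
    omega
  simp [eb, Pi.single_apply, hne]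

lemma supp_fb {k : ℕ} {j : Fin g} (h : k ≤ (j : ℕ)) : Supp k (fb (R := R) j) := by
  intro i hi
  have hne : i ≠ Sum.inr j := by
    rintro rfl
    simp [levl] at hi
    omega
  simp [fb, Pi.single_apply, hne]

/-- symplectic predicate -/
def Symp (A : Matrix (Idx g) (Idx g) R) : Prop := Aᵀ * symplJ R g * A = symplJ R g

lemma Symp.mul {A B : Matrix (Idx g) (Idx g) R} (hA : Symp A) (hB : Symp B) : Symp (A * B) := by
  unfold Symp at *
  rw [transpose_mul]
  calc Bᵀ * Aᵀ * symplJ R g * (A * B) = Bᵀ * (Aᵀ * symplJ R g * A) * B := by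
        noncomm_ring
    _ = symplJ R g := by rw [hA, hB]

lemma Symp.tv (u : Idx g → R) (c : R) : Symp (Tv u c) := Tv_symplectic u c

lemma Symp.pair_mulVec {A : Matrix (Idx g) (Idx g) R} (hA : Symp A) (x y : Idx g → R) :
    pair (A *ᵥ x) (A *ᵥ y) = pair x y := by
  have hJA : ((symplJ R g * A) *ᵥ y) ᵥ* A = symplJ R g *ᵥ y := by
    rw [vecMul_mulVec, transpose_mul, transpose_symplJ]
    have : Aᵀ * -symplJ R g * A = -(symplJ R g) := by
      have h2 : Aᵀ * -symplJ R g * A = -(Aᵀ * symplJ R g * A) := by noncomm_ring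
      rw [h2, hA]
    rw [Matrix.mul_assoc, ← Matrix.mul_assoc, this]
    have h3 : y ᵥ* -(symplJ R g) = -(y ᵥ* symplJ R g) := Matrix.vecMul_neg _ _
    rw [h3, vecMul_symplJ_eq, neg_neg]
  unfold pair
  rw [mulVec_mulVec, dotProduct_comm, dotProduct_mulVec, hJA, dotProduct_comm]

/-- fixes the j-th hyperbolic plane -/
def FixP (A : Matrix (Idx g) (Idx g) R) (j : Fin g) : Prop :=
  A *ᵥ eb j = eb j ∧ A *ᵥ fb j = fb j

lemma FixP.mul {A B : Matrix (Idx g) (Idx g) R} {j : Fin g} (hA : FixP A j) (hB : FixP B j) :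
    FixP (A * B) j := by
  constructor <;> rw [← mulVec_mulVec]
  · rw [hB.1, hA.1]
  · rw [hB.2, hA.2]

lemma fixP_tv_of_supp {k : ℕ} {u : Idx g → R} (c : R) (hu : Supp k u) {j : Fin g}
    (hj : (j : ℕ) < k) : FixP (Tv u c) j := by
  constructor <;> apply Tv_mulVec_fix
  · rw [pair_eb_right]
    exact hu _ (by simpa [levl] using hj)
  · rw [pair_fb_right, neg_eq_zero]
    exact hu _ (by simpa [levl] using hj)

lemma supp_mulVec {k : ℕ} {A : Matrix (Idx g) (Idx g) R} (hA : Symp A)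
    (hfix : ∀ j : Fin g, (j : ℕ) < k → FixP A j) {x : Idx g → R} (hx : Supp k x) :
    Supp k (A *ᵥ x) := by
  intro i hi
  rcases i with j | j
  · have h1 : (A *ᵥ x) (Sum.inl j) = pair (fb j) (A *ᵥ x) := (pair_fb_left j _).symm
    rw [h1, ← (hfix j (by simpa [levl] using hi)).2, hA.pair_mulVec, pair_fb_left]
    exact hx _ hi
  · have h1 : (A *ᵥ x) (Sum.inr j) = -pair (eb j) (A *ᵥ x) := by
      rw [pair_eb_left]; ring
    rw [h1, ← (hfix j (by simpa [levl] using hi)).1, hA.pair_mulVec, pair_eb_left]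
    simp only [neg_neg]
    exact hx _ hi

end Infra

lemma pair_eb_fb (j : Fin g) : pair (eb (R := R) j) (fb j) = -1 := by
  rw [pair_fb_right]
  simp [eb]

section Main

variable {g N : ℕ}

def Lift (N : ℕ) (δ : Matrix (Idx g) (Idx g) (ZMod N)) : Prop :=
  ∃ γ : Matrix (Idx g) (Idx g) ℤ, γᵀ * symplJ ℤ g * γ = symplJ ℤ g ∧
    γ.map (Int.cast : ℤ → ZMod N) = δ

lemma lift_one : Lift N (1 : Matrix (Idx g) (Idx g) (ZMod N)) :=
  ⟨1, by simp, Matrix.map_one _ (by simp) (by simp)⟩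

lemma Lift.mul {δ₁ δ₂ : Matrix (Idx g) (Idx g) (ZMod N)} (h₁ : Lift N δ₁) (h₂ : Lift N δ₂) :
    Lift N (δ₁ * δ₂) := by
  obtain ⟨γ₁, hs₁, hm₁⟩ := h₁
  obtain ⟨γ₂, hs₂, hm₂⟩ := h₂
  refine ⟨γ₁ * γ₂, Symp.mul hs₁ hs₂, ?_⟩
  rw [show ((Int.cast : ℤ → ZMod N)) = ⇑(Int.castRingHom (ZMod N)) from rfl,
    Matrix.map_mul]
  rw [show ⇑(Int.castRingHom (ZMod N)) = ((Int.cast : ℤ → ZMod N)) from rfl, hm₁, hm₂]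

lemma lift_tv (u : Idx g → ZMod N) (c : ZMod N) : Lift N (Tv u c) := by
  choose ul hu using fun i => ZMod.intCast_surjective (u i)
  obtain ⟨cl, hc⟩ := ZMod.intCast_surjective c
  refine ⟨Tv ul cl, Tv_symplectic _ _, ?_⟩
  have hmap := Tv_map (Int.castRingHom (ZMod N)) ul cl
  rw [show ((Int.cast : ℤ → ZMod N)) = ⇑(Int.castRingHom (ZMod N)) from rfl, hmap]
  have h1 : (fun i => (Int.castRingHom (ZMod N)) (ul i)) = u := funext hu
  have h2 : (Int.castRingHom (ZMod N)) cl = c := hc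
  rw [h1, h2]

lemma lift_of_tv_mul {u : Idx g → ZMod N} {c : ZMod N} {δ : Matrix (Idx g) (Idx g) (ZMod N)}
    (h : Lift N (Tv u c * δ)) : Lift N δ := by
  have hinv : Tv u (-c) * Tv u c = 1 := by
    have := Tv_mul_Tv_neg u (-c)
    rwa [neg_neg] at this
  have hd : δ = Tv u (-c) * (Tv u c * δ) := by
    rw [← Matrix.mul_assoc, hinv, Matrix.one_mul]
  rw [hd]
  exact (lift_tv _ _).mul h

lemma main_ind (hN : 1 ≤ N) : ∀ (m : ℕ) (δ : Matrix (Idx g) (Idx g) (ZMod N)),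
    Symp δ → (∀ j : Fin g, (j : ℕ) + m < g → FixP δ j) → Lift N δ := by
  intro m
  induction m with
  | zero =>
    intro δ hδ hfix
    have hone : δ = 1 := by
      ext x y
      have h1 : δ *ᵥ Pi.single y 1 = Pi.single y 1 := by
        rcases y with j | j
        · have := (hfix j (by simp)).1
          unfold eb at this
          exact this
        · have := (hfix j (by simp)).2
          unfold fb at this
          exact this
      have h2 : δᵀ y = Pi.single y 1 := by rw [← h1]; exact (mulVec_single_one δ y).symm
      have h3 : δ x y = δᵀ y x := rfl
      rw [h3, h2]
      simp [Matrix.one_apply, Pi.single_apply, eq_comm]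
    rw [hone]
    exact lift_one
  | succ m ih =>
    intro δ hδ hfix
    by_cases hgm : g ≤ m
    · exact ih δ hδ (fun j hj => absurd hj (by omega))
    push_neg at hgm
    set kn : ℕ := g - 1 - m with hkn
    have hkg : kn < g := by omega
    set k : Fin g := ⟨kn, hkg⟩ with hkdef
    have hkval : (k : ℕ) = kn := rfl
    have hkm : kn + m + 1 = g := by omega
    have hfix' : ∀ j : Fin g, (j : ℕ) < kn → FixP δ j := fun j hj => hfix j (by omega)
    set v := δ *ᵥ eb k with hv
    set w := δ *ᵥ fb k with hw
    have hSv : Supp kn v := supp_mulVec hδ hfix' (supp_eb (le_of_eq hkval.symm))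
    have hSw : Supp kn w := supp_mulVec hδ hfix' (supp_fb (le_of_eq hkval.symm))
    have hpvw : pair v w = -1 := by
      rw [hv, hw, hδ.pair_mulVec, pair_eb_fb]
    -- apply the unit lemma
    set α := symplJ (ZMod N) g *ᵥ v with hα
    set β := (eb (R := ZMod N) k) ᵥ* symplJ (ZMod N) g with hβ
    have hαz : ∀ z, α ⬝ᵥ z = pair z v := fun z => by
      rw [hα, dotProduct_comm]; rfl
    have hβz : ∀ z, β ⬝ᵥ z = pair (eb k) z := fun z => (dotProduct_mulVec _ _ _).symm
    have hwit1 : IsUnit (α ⬝ᵥ w) := by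
      rw [hαz, pair_antisymm, hpvw, neg_neg]
      exact isUnit_one
    have hwit2 : IsUnit (β ⬝ᵥ fb k) := by
      rw [hβz, pair_eb_fb]
      exact isUnit_one.neg
    obtain ⟨z, hzP, huα, huβ⟩ := exists_unit_unit hN α β (fun i => kn ≤ levl i) w (fb k)
      (fun i hi => hSw i (by omega)) (fun i hi => supp_fb (le_of_eq hkval.symm) i (by omega))
      hwit1 hwit2
    have hSz : Supp kn z := fun i hi => hzP i (by omega)
    rw [hαz] at huα
    rw [hβz] at huβ
    obtain ⟨U1, hU1⟩ := huα
    obtain ⟨U2, hU2⟩ := huβ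
    -- T1 maps v to z, T2 maps z to eb k
    set T1 := Tv (z - v) (↑U1⁻¹ : ZMod N) with hT1def
    set T2 := Tv (eb k - z) (↑U2⁻¹ : ZMod N) with hT2def
    have hT1v : T1 *ᵥ v = z := by
      rw [hT1def, Tv_mulVec, pair_sub_left, pair_self, sub_zero, ← hU1, Units.inv_mul,
        one_smul, add_sub_cancel]
    have hT2z : T2 *ᵥ z = eb k := by
      rw [hT2def, Tv_mulVec, pair_sub_left, pair_self, sub_zero, ← hU2, Units.inv_mul,
        one_smul, add_sub_cancel]
    set δ1 := T2 * (T1 * δ) with hδ1def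
    have hδ1 : Symp δ1 := (Symp.tv _ _).mul ((Symp.tv _ _).mul hδ)
    have hδ1e : δ1 *ᵥ eb k = eb k := by
      rw [hδ1def, ← mulVec_mulVec, ← mulVec_mulVec, ← hv, hT1v, hT2z]
    have hfix1 : ∀ j : Fin g, (j : ℕ) < kn → FixP δ1 j := by
      intro j hj
      exact (fixP_tv_of_supp _ ((supp_eb (le_of_eq hkval.symm)).sub hSz) hj).mul
        ((fixP_tv_of_supp _ (hSz.sub hSv) hj).mul (hfix' j hj))
    set w1 := δ1 *ᵥ fb k with hw1
    have hSw1 : Supp kn w1 := supp_mulVec hδ1 hfix1 (supp_fb (le_of_eq hkval.symm))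
    have hp1 : pair (eb k) w1 = -1 := by
      calc pair (eb (R := ZMod N) k) w1 = pair (δ1 *ᵥ eb k) (δ1 *ᵥ fb k) := by
            rw [hδ1e, ← hw1]
        _ = pair (eb k) (fb k) := hδ1.pair_mulVec _ _
        _ = -1 := pair_eb_fb k
    have w1rk : w1 (Sum.inr k) = 1 := by
      have h := pair_eb_left (R := ZMod N) k w1
      rw [hp1] at h
      exact (neg_inj.mp h.symm)
    set a := w1 (Sum.inl k) with ha
    set r := w1 - a • eb k - fb k with hr
    have hSr : Supp kn r := (hSw1.sub (Supp.smul a (supp_eb (le_of_eq hkval.symm)))).sub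
      (supp_fb (le_of_eq hkval.symm))
    have hrl : r (Sum.inl k) = 0 := by
      simp [hr, eb, fb, Pi.single_apply, ha]
    have hrr : r (Sum.inr k) = 0 := by
      simp [hr, eb, fb, Pi.single_apply, w1rk]
    set T3 := Tv (eb (R := ZMod N) k) a with hT3def
    have hT3w : T3 *ᵥ w1 = fb k + r := by
      rw [hT3def, Tv_mulVec, hp1, hr]
      rw [mul_neg_one, neg_smul]
      abel
    set T4 := Tv (r - eb (R := ZMod N) k) (-1) with hT4def
    have hp4 : pair (r - eb (R := ZMod N) k) (fb k + r) = 1 := by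
      rw [pair_sub_left, pair_add_right, pair_add_right, pair_self, pair_eb_fb,
        pair_fb_right, pair_eb_left, hrl, hrr]
      ring
    have hT4w : T4 *ᵥ (fb k + r) = fb k + eb k := by
      rw [hT4def, Tv_mulVec, hp4, mul_one, neg_smul, one_smul]
      abel
    set T5 := Tv (eb (R := ZMod N) k) 1 with hT5def
    have hp5 : pair (eb (R := ZMod N) k) (fb k + eb k) = -1 := by
      rw [pair_add_right, pair_eb_fb, pair_self, add_zero]
    have hT5w : T5 *ᵥ (fb k + eb k) = fb k := by
      rw [hT5def, Tv_mulVec, hp5, one_mul, neg_smul, one_smul]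
      abel
    -- the T3, T4, T5 fix eb k
    have hT3e : T3 *ᵥ eb k = eb k := Tv_mulVec_fix _ (pair_self _)
    have hT4e : T4 *ᵥ eb k = eb k := by
      apply Tv_mulVec_fix
      rw [pair_sub_left, pair_eb_right, pair_self, hrr, sub_zero]
    have hT5e : T5 *ᵥ eb k = eb k := Tv_mulVec_fix _ (pair_self _)
    set ε := T5 * (T4 * (T3 * δ1)) with hεdef
    have hεS : Symp ε := (Symp.tv _ _).mul ((Symp.tv _ _).mul ((Symp.tv _ _).mul hδ1))
    have hεk : FixP ε k := by
      constructor
      · rw [hεdef, ← mulVec_mulVec, ← mulVec_mulVec, ← mulVec_mulVec, hδ1e, hT3e, hT4e, hT5e]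
      · rw [hεdef, ← mulVec_mulVec, ← mulVec_mulVec, ← mulVec_mulVec, ← hw1, hT3w, hT4w, hT5w]
    have hεfix : ∀ j : Fin g, (j : ℕ) + m < g → FixP ε j := by
      intro j hj
      rcases Nat.lt_or_ge (j : ℕ) kn with hlt | hge
      · exact (fixP_tv_of_supp _ (supp_eb (le_of_eq hkval.symm)) hlt).mul
          ((fixP_tv_of_supp _ (hSr.sub (supp_eb (le_of_eq hkval.symm))) hlt).mul
            ((fixP_tv_of_supp _ (supp_eb (le_of_eq hkval.symm)) hlt).mul (hfix1 j hlt)))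
      · have hjk : j = k := by
          apply Fin.ext
          rw [hkval]
          omega
        rw [hjk]
        exact hεk
    have hLε : Lift N ε := ih ε hεS hεfix
    rw [hδ1def] at hεdef
    rw [hεdef] at hLε
    exact lift_of_tv_mul (lift_of_tv_mul (lift_of_tv_mul (lift_of_tv_mul
      (lift_of_tv_mul hLε))))

end Main

end SpSurj

/-- The reduction map `Sp_{2g}(ℤ) → Sp_{2g}(ℤ/Nℤ)` is surjective. -/
theorem sp_reduction_surjective
    (g N : ℕ) (hg : 1 ≤ g) (hN : 1 ≤ N)
    (δ : Matrix (Fin g ⊕ Fin g) (Fin g ⊕ Fin g) (ZMod N))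
    (hδ : δᵀ * symplJ (ZMod N) g * δ = symplJ (ZMod N) g) :
    ∃ γ : Matrix (Fin g ⊕ Fin g) (Fin g ⊕ Fin g) ℤ,
      γᵀ * symplJ ℤ g * γ = symplJ ℤ g ∧
      γ.map (Int.cast : ℤ → ZMod N) = δ := by
  exact SpSurj.main_ind (g := g) hN g δ hδ (fun j hj => absurd hj (by omega))
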